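/- Let G be a group of piecewise linear orientation preserving homeomorphisms of [0,1] with no common fixed point in the open interval (0,1), and let A and B be finitely generated subgroups of the commutator subgroup G'. Then there exists g ∈ G such that gAg⁻¹ and B centralize each other (i.e., every element of gAg⁻¹ commutes with every element of B). -/

import Mathlib

/-- The unit interval `[0,1]` as a subtype of `ℝ`. -/
abbrev UnitInt : Type := Set.Icc (0 : ℝ) 1

/-- An order preserving self-bijection of `[0,1]` is piecewise linear if
there is a finite set of breakpoints away from which it is affine:
on any subinterval `[a,b]` containing no breakpoint in its interior,
`f` is given by `x ↦ p * x + q`. -/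
def IsPL (f : UnitInt ≃o UnitInt) : Prop :=
  ∃ s : Finset ℝ, ∀ a b : UnitInt,
    (∀ c ∈ s, ¬((a : ℝ) < c ∧ c < (b : ℝ))) →
    ∃ p q : ℝ, ∀ x : UnitInt, a ≤ x → x ≤ b → ((f x : ℝ)) = p * (x : ℝ) + q

noncomputable instance : Fact ((0:ℝ) ≤ 1) := ⟨zero_le_one⟩

lemma uimem (x : UnitInt) : 0 ≤ (x:ℝ) ∧ (x:ℝ) ≤ 1 := x.2

lemma map_zero' (f : UnitInt ≃o UnitInt) : f ⟨0, by norm_num⟩ = ⟨0, by norm_num⟩ := by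
  have h1 : f ⟨0, by norm_num⟩ ≤ f (f.symm ⟨0, by norm_num⟩) := by
    apply f.monotone
    exact Subtype.coe_le_coe.mp (f.symm ⟨0, by norm_num⟩).2.1
  rw [f.apply_symm_apply] at h1
  exact le_antisymm h1 (Subtype.coe_le_coe.mp (f ⟨0, by norm_num⟩).2.1)

lemma map_one' (f : UnitInt ≃o UnitInt) : f ⟨1, by norm_num⟩ = ⟨1, by norm_num⟩ := by
  have h1 : f (f.symm ⟨1, by norm_num⟩) ≤ f ⟨1, by norm_num⟩ := by
    apply f.monotone
    exact Subtype.coe_le_coe.mp (f.symm ⟨1, by norm_num⟩).2.2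
  rw [f.apply_symm_apply] at h1
  exact le_antisymm (Subtype.coe_le_coe.mp (f ⟨1, by norm_num⟩).2.2) h1

def Lin0 (f : UnitInt ≃o UnitInt) (p : ℝ) : Prop :=
  ∃ δ : ℝ, 0 < δ ∧ ∀ x : UnitInt, (x:ℝ) ≤ δ → (f x : ℝ) = p * x

def Lin1 (f : UnitInt ≃o UnitInt) (p : ℝ) : Prop :=
  ∃ δ : ℝ, 0 < δ ∧ ∀ x : UnitInt, 1 - δ ≤ (x:ℝ) → (f x : ℝ) = p * x + (1 - p)

lemma lin0_of_PL (f : UnitInt ≃o UnitInt) (hf : IsPL f) : ∃ p : ℝ, 0 < p ∧ Lin0 f p := by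
  obtain ⟨s, hs⟩ := hf
  classical
  set t := s.filter (fun c => 0 < c) with ht
  set δ : ℝ := if h : t.Nonempty then min (t.min' h) 1 else 1 with hδ
  have hδpos : 0 < δ := by
    rw [hδ]; split
    · rename_i h
      exact lt_min ((Finset.mem_filter.mp (t.min'_mem h)).2) one_pos
    · exact one_pos
  have hδ1 : δ ≤ 1 := by
    rw [hδ]; split
    · exact min_le_right _ _
    · exact le_refl 1
  have hb : (δ : ℝ) ∈ Set.Icc (0:ℝ) 1 := ⟨le_of_lt hδpos, hδ1⟩
  obtain ⟨p, q, hpq⟩ := hs ⟨0, by norm_num⟩ ⟨δ, hb⟩ (by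
    intro c hc ⟨h1, h2⟩
    have hct : c ∈ t := Finset.mem_filter.mpr ⟨hc, h1⟩
    have hne : t.Nonempty := ⟨c, hct⟩
    have hdc : δ ≤ c := by
      rw [hδ, dif_pos hne]
      exact le_trans (min_le_left _ _) (t.min'_le c hct)
    exact absurd h2 (not_lt.mpr hdc))
  have hq : q = 0 := by
    have h0 := hpq ⟨0, by norm_num⟩ (le_refl _) (Subtype.mk_le_mk.mpr (le_of_lt hδpos))
    rw [map_zero'] at h0
    simpa using h0.symm
  have hfb := hpq ⟨δ, hb⟩ (Subtype.mk_le_mk.mpr (le_of_lt hδpos)) (le_refl _)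
  have hfbpos : (0:ℝ) < (f ⟨δ, hb⟩ : ℝ) := by
    have : f ⟨0, by norm_num⟩ < f ⟨δ, hb⟩ := f.strictMono (Subtype.mk_lt_mk.mpr hδpos)
    rw [map_zero'] at this
    exact_mod_cast this
  have hp : 0 < p := by
    rw [hfb, hq, add_zero] at hfbpos
    nlinarith
  refine ⟨p, hp, δ, hδpos, fun x hx => ?_⟩
  have := hpq x (Subtype.mk_le_mk.mpr x.2.1) (Subtype.mk_le_mk.mpr hx)
  rw [this, hq, add_zero]

lemma lin1_of_PL (f : UnitInt ≃o UnitInt) (hf : IsPL f) : ∃ p : ℝ, 0 < p ∧ Lin1 f p := by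
  obtain ⟨s, hs⟩ := hf
  classical
  set t := s.filter (fun c => c < 1) with ht
  set δ : ℝ := if h : t.Nonempty then min (1 - t.max' h) 1 else 1 with hδ
  have hδpos : 0 < δ := by
    rw [hδ]; split
    · rename_i h
      have := (Finset.mem_filter.mp (t.max'_mem h)).2
      exact lt_min (by linarith) one_pos
    · exact one_pos
  have hδ1 : δ ≤ 1 := by
    rw [hδ]; split
    · exact min_le_right _ _
    · exact le_refl 1
  have hb : (1 - δ : ℝ) ∈ Set.Icc (0:ℝ) 1 := ⟨by linarith, by linarith⟩
  obtain ⟨p, q, hpq⟩ := hs ⟨1 - δ, hb⟩ ⟨1, by norm_num⟩ (by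
    intro c hc ⟨h1, h2⟩
    have hct : c ∈ t := Finset.mem_filter.mpr ⟨hc, h2⟩
    have hne : t.Nonempty := ⟨c, hct⟩
    have hdc : c ≤ 1 - δ := by
      have h3 := t.le_max' c hct
      have : δ ≤ 1 - t.max' hne := by rw [hδ, dif_pos hne]; exact min_le_left _ _
      linarith
    exact absurd h1 (not_lt.mpr hdc))
  have hq : p + q = 1 := by
    have h0 := hpq ⟨1, by norm_num⟩ (Subtype.mk_le_mk.mpr (by linarith)) (le_refl _)
    rw [map_one'] at h0
    simpa [mul_one] using h0.symm
  have hfb := hpq ⟨1 - δ, hb⟩ (le_refl _) (Subtype.mk_le_mk.mpr (by linarith))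
  have hfblt : ((f ⟨1 - δ, hb⟩ : UnitInt) : ℝ) < 1 := by
    have : f ⟨1 - δ, hb⟩ < f ⟨1, by norm_num⟩ := f.strictMono (Subtype.mk_lt_mk.mpr (by linarith))
    rw [map_one'] at this
    exact_mod_cast this
  have hp : 0 < p := by
    rw [hfb] at hfblt
    have hco : ((⟨1-δ,hb⟩ : UnitInt) : ℝ) = 1 - δ := rfl
    rw [hco] at hfblt
    nlinarith
  refine ⟨p, hp, δ, hδpos, fun x hx => ?_⟩
  have := hpq x (Subtype.mk_le_mk.mpr hx) (Subtype.mk_le_mk.mpr x.2.2)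
  rw [this]
  have : q = 1 - p := by linarith
  rw [this]

lemma lin0_mul {f g : UnitInt ≃o UnitInt} {p q : ℝ} (hq : 0 < q)
    (hf : Lin0 f p) (hg : Lin0 g q) : Lin0 (f * g) (p * q) := by
  obtain ⟨δf, hδf, hLf⟩ := hf
  obtain ⟨δg, hδg, hLg⟩ := hg
  refine ⟨min δg (δf / q), lt_min hδg (div_pos hδf hq), fun x hx => ?_⟩
  have hx1 : (x:ℝ) ≤ δg := le_trans hx (min_le_left _ _)
  have hx2 : (x:ℝ) ≤ δf / q := le_trans hx (min_le_right _ _)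
  have hgx : (g x : ℝ) = q * x := hLg x hx1
  have hgx2 : ((g x : UnitInt) : ℝ) ≤ δf := by
    rw [hgx]
    rw [mul_comm]
    exact (le_div_iff₀ hq).mp hx2
  show (f (g x) : ℝ) = p * q * x
  rw [hLf (g x) hgx2, hgx]; ring

lemma lin1_mul {f g : UnitInt ≃o UnitInt} {p q : ℝ} (hq : 0 < q)
    (hf : Lin1 f p) (hg : Lin1 g q) : Lin1 (f * g) (p * q) := by
  obtain ⟨δf, hδf, hLf⟩ := hf
  obtain ⟨δg, hδg, hLg⟩ := hg
  refine ⟨min δg (δf / q), lt_min hδg (div_pos hδf hq), fun x hx => ?_⟩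
  have hx1 : 1 - δg ≤ (x:ℝ) := by
    have := min_le_left δg (δf / q); linarith
  have hx2 : 1 - δf / q ≤ (x:ℝ) := by
    have := min_le_right δg (δf / q); linarith
  have hgx : (g x : ℝ) = q * x + (1 - q) := hLg x hx1
  have hgx2 : 1 - δf ≤ ((g x : UnitInt) : ℝ) := by
    rw [hgx]
    have : q * (1 - δf / q) ≤ q * x := by nlinarith
    have h2 : q * (1 - δf / q) = q - δf := by field_simp
    linarith
  show (f (g x) : ℝ) = p * q * x + (1 - p * q)
  rw [hLf (g x) hgx2, hgx]; ring

lemma lin0_inv {f : UnitInt ≃o UnitInt} {p : ℝ} (hp : 0 < p)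
    (hf : Lin0 f p) : Lin0 f⁻¹ p⁻¹ := by
  obtain ⟨δ, hδ, hL⟩ := hf
  set δ₀ := min δ 1 with hδ₀
  have hδ₀pos : 0 < δ₀ := lt_min hδ one_pos
  have hδ₀1 : δ₀ ≤ 1 := min_le_right _ _
  have hδ₀δ : δ₀ ≤ δ := min_le_left _ _
  refine ⟨p * δ₀, mul_pos hp hδ₀pos, fun x hx => ?_⟩
  set d : UnitInt := ⟨δ₀, ⟨le_of_lt hδ₀pos, hδ₀1⟩⟩ with hd
  have hfd : (f d : ℝ) = p * δ₀ := hL d hδ₀δ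
  set y := f⁻¹ x with hy
  have hxy : f y = x := f.apply_symm_apply x
  have hyd : y ≤ d := by
    rw [← f.le_iff_le, hxy]
    exact Subtype.coe_le_coe.mp (by rw [hfd]; exact hx)
  have hyδ : (y:ℝ) ≤ δ := le_trans (Subtype.coe_le_coe.mpr hyd) hδ₀δ
  have hfy : (f y : ℝ) = p * y := hL y hyδ
  rw [hxy] at hfy
  show (y : ℝ) = p⁻¹ * x
  field_simp
  linarith [hfy]

lemma lin1_inv {f : UnitInt ≃o UnitInt} {p : ℝ} (hp : 0 < p)
    (hf : Lin1 f p) : Lin1 f⁻¹ p⁻¹ := by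
  obtain ⟨δ, hδ, hL⟩ := hf
  set δ₀ := min δ 1 with hδ₀
  have hδ₀pos : 0 < δ₀ := lt_min hδ one_pos
  have hδ₀1 : δ₀ ≤ 1 := min_le_right _ _
  have hδ₀δ : δ₀ ≤ δ := min_le_left _ _
  refine ⟨p * δ₀, mul_pos hp hδ₀pos, fun x hx => ?_⟩
  set d : UnitInt := ⟨1 - δ₀, ⟨by linarith, by linarith⟩⟩ with hd
  have hfd : (f d : ℝ) = 1 - p * δ₀ := by
    rw [hL d (by simp [hd]; linarith)]; ring
  set y := f⁻¹ x with hy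
  have hxy : f y = x := f.apply_symm_apply x
  have hyd : d ≤ y := by
    rw [← f.le_iff_le, hxy]
    exact Subtype.coe_le_coe.mp (by rw [hfd]; exact hx)
  have hyδ : 1 - δ ≤ (y:ℝ) := by
    have := Subtype.coe_le_coe.mpr hyd
    simp only [hd] at this
    have h2 : (1 : ℝ) - δ₀ ≤ (y:ℝ) := this
    linarith
  have hfy : (f y : ℝ) = p * y + (1 - p) := hL y hyδ
  rw [hxy] at hfy
  show (y : ℝ) = p⁻¹ * x + (1 - p⁻¹)
  field_simp
  linarith [hfy]

/-- Subgroup of maps fixing `[0,ε] ∪ [1-ε,1]` pointwise. -/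
def fixSub (ε : ℝ) : Subgroup (UnitInt ≃o UnitInt) where
  carrier := {f | ∀ x : UnitInt, ((x:ℝ) ≤ ε ∨ 1 - ε ≤ (x:ℝ)) → f x = x}
  one_mem' := fun x _ => rfl
  mul_mem' := by
    intro f g hf hg x hx
    show f (g x) = x
    rw [hg x hx, hf x hx]
  inv_mem' := by
    intro f hf x hx
    show f.symm x = x
    conv_lhs => rw [← hf x hx]
    exact f.symm_apply_apply x

def nearId : Subgroup (UnitInt ≃o UnitInt) where
  carrier := {f | ∃ ε : ℝ, 0 < ε ∧ f ∈ fixSub ε}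
  one_mem' := ⟨1, one_pos, (fixSub 1).one_mem⟩
  mul_mem' := by
    rintro f g ⟨ε₁, hε₁, hf⟩ ⟨ε₂, hε₂, hg⟩
    refine ⟨min ε₁ ε₂, lt_min hε₁ hε₂, ?_⟩
    intro x hx
    have h1 : (x:ℝ) ≤ ε₁ ∨ 1 - ε₁ ≤ (x:ℝ) := by
      rcases hx with h | h
      · left; exact le_trans h (min_le_left _ _)
      · right; have := min_le_left ε₁ ε₂; linarith
    have h2 : (x:ℝ) ≤ ε₂ ∨ 1 - ε₂ ≤ (x:ℝ) := by
      rcases hx with h | h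
      · left; exact le_trans h (min_le_right _ _)
      · right; have := min_le_right ε₁ ε₂; linarith
    show f (g x) = x
    rw [hg x h2, hf x h1]
  inv_mem' := by
    rintro f ⟨ε, hε, hf⟩
    exact ⟨ε, hε, (fixSub ε).inv_mem hf⟩

open scoped commutatorElement

lemma commutator_nearId {g h : UnitInt ≃o UnitInt} (hg : IsPL g) (hh : IsPL h) :
    ⁅g, h⁆ ∈ nearId := by
  obtain ⟨p, hp, hg0⟩ := lin0_of_PL g hg
  obtain ⟨q, hq, hh0⟩ := lin0_of_PL h hh
  obtain ⟨p', hp', hg1⟩ := lin1_of_PL g hg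
  obtain ⟨q', hq', hh1⟩ := lin1_of_PL h hh
  have k0 : Lin0 (g * h * g⁻¹ * h⁻¹) (p * q * p⁻¹ * q⁻¹) :=
    lin0_mul (inv_pos.mpr hq)
      (lin0_mul (inv_pos.mpr hp) (lin0_mul hq hg0 hh0) (lin0_inv hp hg0))
      (lin0_inv hq hh0)
  have k1 : Lin1 (g * h * g⁻¹ * h⁻¹) (p' * q' * p'⁻¹ * q'⁻¹) :=
    lin1_mul (inv_pos.mpr hq')
      (lin1_mul (inv_pos.mpr hp') (lin1_mul hq' hg1 hh1) (lin1_inv hp' hg1))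
      (lin1_inv hq' hh1)
  have e0 : p * q * p⁻¹ * q⁻¹ = 1 := by field_simp
  have e1 : p' * q' * p'⁻¹ * q'⁻¹ = 1 := by field_simp
  rw [e0] at k0
  rw [e1] at k1
  obtain ⟨δ₀, hδ₀, hk0⟩ := k0
  obtain ⟨δ₁, hδ₁, hk1⟩ := k1
  refine ⟨min δ₀ δ₁, lt_min hδ₀ hδ₁, ?_⟩
  intro x hx
  show (g * h * g⁻¹ * h⁻¹) x = x
  apply Subtype.ext
  rcases hx with hx | hx
  · rw [hk0 x (le_trans hx (min_le_left _ _))]; ring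
  · have : 1 - δ₁ ≤ (x:ℝ) := by have := min_le_right δ₀ δ₁; linarith
    rw [hk1 x this]; ring

lemma comm_le_nearId (G : Subgroup (UnitInt ≃o UnitInt)) (hPL : ∀ g ∈ G, IsPL g) :
    ⁅G, G⁆ ≤ nearId := by
  rw [Subgroup.commutator_le]
  intro g hg h hh
  exact commutator_nearId (hPL g hg) (hPL h hh)

lemma fg_fix (A : Subgroup (UnitInt ≃o UnitInt)) (hA : A ≤ nearId) (hAfg : A.FG) :
    ∃ ε : ℝ, 0 < ε ∧ A ≤ fixSub ε := by
  obtain ⟨S, hS⟩ := hAfg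
  classical
  have key : ∀ T : Finset (UnitInt ≃o UnitInt), (∀ f ∈ T, f ∈ nearId) →
      ∃ ε : ℝ, 0 < ε ∧ ∀ f ∈ T, f ∈ fixSub ε := by
    haveI : DecidableEq (UnitInt ≃o UnitInt) := Classical.decEq _
    intro T
    induction T using Finset.induction with
    | empty => intro _; exact ⟨1, one_pos, by simp⟩
    | @insert a T ha ih =>
      intro hT
      obtain ⟨ε₁, hε₁, hTf⟩ := ih (fun x hx => hT x (by simp [hx]))
      obtain ⟨ε₂, hε₂, haf⟩ := hT a (by simp)
      refine ⟨min ε₁ ε₂, lt_min hε₁ hε₂, ?_⟩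
      intro f hf
      rw [Finset.mem_insert] at hf
      have mono : ∀ (ε' ε'' : ℝ) (g : UnitInt ≃o UnitInt), ε' ≤ ε'' → g ∈ fixSub ε'' → g ∈ fixSub ε' := by
        intro ε' ε'' g hle hgm x hx
        apply hgm
        rcases hx with h | h
        · left; linarith
        · right; linarith
      rcases hf with rfl | hf
      · exact mono _ _ _ (min_le_right _ _) haf
      · exact mono _ _ _ (min_le_left _ _) (hTf f hf)
  have hSsub : ∀ f ∈ S, f ∈ nearId := by
    intro x hx
    exact hA (hS ▸ Subgroup.subset_closure hx)
  obtain ⟨ε, hε, hSf⟩ := key S hSsub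
  exact ⟨ε, hε, hS ▸ (Subgroup.closure_le _).mpr (fun f hf => hSf f hf)⟩

lemma compress (G : Subgroup (UnitInt ≃o UnitInt))
    (hnofix : ∀ x : UnitInt, 0 < (x : ℝ) → (x : ℝ) < 1 → ∃ g ∈ G, g x ≠ x)
    (ε : ℝ) (hε : 0 < ε) (hε2 : ε < 1/2) :
    ∃ g ∈ G, ((g ⟨1 - ε, ⟨by linarith, by linarith⟩⟩ : UnitInt) : ℝ) < ε := by
  set b₀ : UnitInt := ⟨1 - ε, ⟨by linarith, by linarith⟩⟩ with hb₀
  set S : Set UnitInt := {x | ∃ g ∈ G, g b₀ = x} with hSdef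
  have hb₀S : b₀ ∈ S := ⟨1, G.one_mem, rfl⟩
  set c : UnitInt := sInf S with hc
  have hmono : ∀ h : UnitInt ≃o UnitInt, h ∈ G → c ≤ h c := by
    intro h hh
    have himg : h '' S ⊆ S := by
      rintro _ ⟨x, ⟨g, hgG, rfl⟩, rfl⟩
      exact ⟨h * g, G.mul_mem hh hgG, rfl⟩
    have : h c = sInf (h '' S) := by
      rw [hc, h.map_sInf, sInf_image]
    rw [this]
    exact sInf_le_sInf himg
  have hfix : ∀ h : UnitInt ≃o UnitInt, h ∈ G → h c = c := by
    intro h hh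
    have h1 := hmono h hh
    have h2 := hmono h⁻¹ (G.inv_mem hh)
    have h3 : h (h⁻¹ c) = c := h.apply_symm_apply c
    have h4 : h c ≤ c := by
      have h5 := h.monotone h2
      rwa [h3] at h5
    exact le_antisymm h4 h1
  have hcle : c ≤ b₀ := sInf_le hb₀S
  have hclt1 : (c:ℝ) < 1 := by
    have := Subtype.coe_le_coe.mpr hcle
    have hb : (b₀ : ℝ) = 1 - ε := rfl
    rw [hb] at this
    linarith
  have hc0 : (c:ℝ) = 0 := by
    by_contra hne
    have hpos : 0 < (c:ℝ) := lt_of_le_of_ne c.2.1 (Ne.symm hne)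
    obtain ⟨g, hgG, hgne⟩ := hnofix c hpos hclt1
    exact hgne (hfix g hgG)
  have hlt : c < (⟨ε, ⟨le_of_lt hε, by linarith⟩⟩ : UnitInt) := by
    rw [← Subtype.coe_lt_coe, hc0]
    exact hε
  rw [hc] at hlt
  obtain ⟨x, hxS, hxlt⟩ := sInf_lt_iff.mp hlt
  obtain ⟨g, hgG, rfl⟩ := hxS
  exact ⟨g, hgG, Subtype.coe_lt_coe.mpr hxlt⟩

theorem commuting_conjugates_in_PL
    (G : Subgroup (UnitInt ≃o UnitInt)) (hPL : ∀ g ∈ G, IsPL g)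
    (hnofix : ∀ x : UnitInt, 0 < (x : ℝ) → (x : ℝ) < 1 → ∃ g ∈ G, g x ≠ x)
    (A B : Subgroup (UnitInt ≃o UnitInt))
    (hA : A ≤ ⁅G, G⁆) (hB : B ≤ ⁅G, G⁆) (hAfg : A.FG) (hBfg : B.FG) :
    ∃ g ∈ G, ∀ a ∈ A, ∀ b ∈ B, (g * a * g⁻¹) * b = b * (g * a * g⁻¹) := by
  have hAN : A ≤ nearId := le_trans hA (comm_le_nearId G hPL)
  have hBN : B ≤ nearId := le_trans hB (comm_le_nearId G hPL)
  obtain ⟨εA, hεA, hAfix⟩ := fg_fix A hAN hAfg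
  obtain ⟨εB, hεB, hBfix⟩ := fg_fix B hBN hBfg
  set ε : ℝ := min (min εA εB) (1/3) with hε
  have hεpos : 0 < ε := lt_min (lt_min hεA hεB) (by norm_num)
  have hεhalf : ε < 1/2 := lt_of_le_of_lt (min_le_right _ _) (by norm_num)
  have hεA' : ε ≤ εA := le_trans (min_le_left _ _) (min_le_left _ _)
  have hεB' : ε ≤ εB := le_trans (min_le_left _ _) (min_le_right _ _)
  obtain ⟨g, hgG, hgb⟩ := compress G hnofix ε hεpos hεhalf
  refine ⟨g, hgG, ?_⟩
  intro a ha b hb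
  have haf : a ∈ fixSub εA := hAfix ha
  have hbf : b ∈ fixSub εB := hBfix hb
  set εU : UnitInt := ⟨ε, ⟨le_of_lt hεpos, by linarith⟩⟩ with hεU
  -- the conjugate fixes every point ≥ ε
  have a'fix : ∀ x : UnitInt, ε ≤ (x:ℝ) → (g * a * g⁻¹) x = x := by
    intro x hx
    have hgbx : g ⟨1 - ε, ⟨by linarith, by linarith⟩⟩ < x := by
      rw [← Subtype.coe_lt_coe]
      exact lt_of_lt_of_le hgb hx
    have hginv : (1 : ℝ) - ε < ((g⁻¹ x : UnitInt) : ℝ) := by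
      have h2 := g.symm.strictMono hgbx
      rw [g.symm_apply_apply] at h2
      exact Subtype.coe_lt_coe.mpr h2
    have hfixa : a (g⁻¹ x) = g⁻¹ x := haf (g⁻¹ x) (Or.inr (by linarith))
    show g (a (g⁻¹ x)) = x
    rw [hfixa]
    exact g.apply_symm_apply x
  have a'εU : (g * a * g⁻¹) εU = εU := a'fix εU (le_refl ε)
  have bεU : b εU = εU := hbf εU (Or.inl hεB')
  apply OrderIso.ext
  funext x
  show (g * a * g⁻¹) (b x) = b ((g * a * g⁻¹) x)
  rcases le_or_gt ε (x:ℝ) with hx | hx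
  · -- x ≥ ε : conjugate fixes x and b x
    have hbx : ε ≤ ((b x : UnitInt) : ℝ) := by
      have : εU ≤ x := Subtype.coe_le_coe.mp hx
      have := b.monotone this
      rw [bεU] at this
      exact Subtype.coe_le_coe.mpr this
    rw [a'fix x hx, a'fix (b x) hbx]
  · -- x < ε : b fixes x and (conjugate of a) x
    have hbx : b x = x := hbf x (Or.inl (le_trans (le_of_lt hx) hεB'))
    have ha'x : ((g * a * g⁻¹) x : ℝ) < ε := by
      have hxεU : x < εU := Subtype.coe_lt_coe.mp hx
      have := (g * a * g⁻¹).strictMono hxεU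
      rw [a'εU] at this
      exact Subtype.coe_lt_coe.mpr this
    have hba'x : b ((g * a * g⁻¹) x) = (g * a * g⁻¹) x :=
      hbf _ (Or.inl (le_trans (le_of_lt ha'x) hεB'))
    rw [hbx, hba'x]
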